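/- Let n be a nodal configuration with l i n ≠ 0 for every member i. Then the force-density map x : (Fin n_n → EuclideanSpace ℝ (Fin 3)) → EuclideanSpace ℝ (Fin n_e), (x n) i = E i * A i * (1 / l0 i − 1 / (l i n)), is differentiable at n, and its Fréchet derivative is the linear map δn ↦ (fun i => E i * A i * (l i n)⁻³ * ⟪h i n, Σ_q (C i q) • δn q⟫); in matrix form, ∂x/∂n = A₁ l̂⁻³ Â Ê. -/

import Mathlib

open scoped RealInnerProductSpace
open Matrix

noncomputable section

/-- The Euclidean space of nodal vectors of a structure with `n_n` nodes. -/
abbrev NodalSpace (n_n : ℕ) := PiLp 2 (fun _ : Fin n_n => EuclideanSpace ℝ (Fin 3))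

/-- The force-density map `x : n ↦ (i ↦ E i * A i * (1 / l0 i − 1 / l i n))` is
differentiable at any configuration with all member lengths nonzero, and its Fréchet
derivative is `δn ↦ (i ↦ E i * A i * (l i n)⁻³ * ⟪h i n, Σ_q (C i q) • δn q⟫)`;
in matrix form, `∂x/∂n = A₁ l̂⁻³ Â Ê`. -/
theorem force_density_fderiv {n_n n_e : ℕ}
    (j k : Fin n_e → Fin n_n) (hjk : ∀ i, j i ≠ k i)
    (C : Matrix (Fin n_e) (Fin n_n) ℝ)
    (hC : ∀ i p, C i p = if p = k i then 1 else if p = j i then -1 else 0)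
    (A E l0 : Fin n_e → ℝ)
    (hA : ∀ i, 0 < A i) (hE : ∀ i, 0 < E i) (hl0 : ∀ i, 0 < l0 i)
    (n : NodalSpace n_n)
    (hl : ∀ i, ‖∑ q, C i q • n q‖ ≠ 0) :
    DifferentiableAt ℝ
      (fun n' : NodalSpace n_n =>
        ((WithLp.equiv 2 (∀ _ : Fin n_e, ℝ)).symm
          (fun i => E i * A i * (1 / l0 i - 1 / ‖∑ q, C i q • n' q‖)) :
          EuclideanSpace ℝ (Fin n_e))) n ∧
    ∀ (δn : NodalSpace n_n) (i : Fin n_e),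
      fderiv ℝ
        (fun n' : NodalSpace n_n =>
          ((WithLp.equiv 2 (∀ _ : Fin n_e, ℝ)).symm
            (fun i => E i * A i * (1 / l0 i - 1 / ‖∑ q, C i q • n' q‖)) :
            EuclideanSpace ℝ (Fin n_e))) n δn i =
        E i * A i * (‖∑ q, C i q • n q‖ ^ 3)⁻¹ * ⟪∑ q, C i q • n q, ∑ q, C i q • δn q⟫ := by
  set T : Fin n_e → (NodalSpace n_n →L[ℝ] EuclideanSpace ℝ (Fin 3)) :=
    fun i => ∑ q, C i q • PiLp.proj 2 (fun _ : Fin n_n => EuclideanSpace ℝ (Fin 3)) q with hT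
  have hTapp : ∀ i (m : NodalSpace n_n), T i m = ∑ q, C i q • m q := by
    intro i m
    simp [hT, ContinuousLinearMap.sum_apply]
  have hTfd : ∀ i, HasFDerivAt (fun n' : NodalSpace n_n => ∑ q, C i q • n' q) (T i) n := by
    intro i
    have := (T i).hasFDerivAt (x := n)
    refine this.congr_of_eventuallyEq (Filter.Eventually.of_forall fun m => ?_)
    exact (hTapp i m).symm
  have hsfd : ∀ i, HasFDerivAt (fun n' : NodalSpace n_n => ‖∑ q, C i q • n' q‖)
      ((1 / (2 * ‖∑ q, C i q • n q‖)) •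
        ((fderivInnerCLM ℝ (∑ q, C i q • n q, ∑ q, C i q • n q)).comp ((T i).prod (T i)))) n := by
    intro i
    have h2 : (⟪∑ q, C i q • n q, ∑ q, C i q • n q⟫ : ℝ) ≠ 0 := by
      rw [real_inner_self_eq_norm_sq]; exact pow_ne_zero 2 (hl i)
    have := (((hTfd i).inner ℝ (hTfd i)).sqrt h2 :)
    simp only [real_inner_self_eq_norm_sq, Real.sqrt_sq (norm_nonneg _)] at this
    exact this
  -- component derivatives
  set D : Fin n_e → (NodalSpace n_n →L[ℝ] ℝ) :=
    fun i => (E i * A i * (‖∑ q, C i q • n q‖ ^ 3)⁻¹) •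
      ((innerSL ℝ (∑ q, C i q • n q)).comp (T i)) with hD
  have key : ∀ i, HasFDerivAt
      (fun n' : NodalSpace n_n => E i * A i * (1 / l0 i - 1 / ‖∑ q, C i q • n' q‖)) (D i) n := by
    intro i
    have hinv := (hasDerivAt_inv (hl i)).comp_hasFDerivAt n (hsfd i)
    have h1 := ((hasFDerivAt_const (1 / l0 i) n).sub hinv).const_mul (E i * A i)
    refine (h1.congr_of_eventuallyEq (Filter.Eventually.of_forall fun m => ?_)).congr_fderiv ?_
    · simp [Function.comp, one_div]
    ext δ
    have hn := hl i
    simp only [hD, ContinuousLinearMap.smul_apply, ContinuousLinearMap.sub_apply,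
      ContinuousLinearMap.zero_apply, ContinuousLinearMap.neg_apply,
      ContinuousLinearMap.comp_apply, ContinuousLinearMap.prod_apply,
      fderivInnerCLM_apply, innerSL_apply_apply, smul_eq_mul]
    rw [real_inner_comm (T i δ)]
    field_simp
    ring
  -- assemble
  have hG : HasFDerivAt (fun n' : NodalSpace n_n =>
      (fun i => E i * A i * (1 / l0 i - 1 / ‖∑ q, C i q • n' q‖) : Fin n_e → ℝ))
      (ContinuousLinearMap.pi D) n := hasFDerivAt_pi.2 key
  set L := (PiLp.continuousLinearEquiv 2 ℝ (fun _ : Fin n_e => ℝ)).symm with hL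
  have hF : HasFDerivAt (fun n' : NodalSpace n_n =>
      ((WithLp.equiv 2 (∀ _ : Fin n_e, ℝ)).symm
        (fun i => E i * A i * (1 / l0 i - 1 / ‖∑ q, C i q • n' q‖)) :
        EuclideanSpace ℝ (Fin n_e)))
      ((L : (∀ _ : Fin n_e, ℝ) →L[ℝ] EuclideanSpace ℝ (Fin n_e)).comp
        (ContinuousLinearMap.pi D)) n :=
    (L.toContinuousLinearMap.hasFDerivAt).comp n hG
  refine ⟨hF.differentiableAt, fun δn i => ?_⟩
  haveI : ContinuousSMul ℝ (NodalSpace n_n) := IsBoundedSMul.continuousSMul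
  rw [hF.fderiv]
  have hLD : ((L : (∀ _ : Fin n_e, ℝ) →L[ℝ] EuclideanSpace ℝ (Fin n_e)).comp
      (ContinuousLinearMap.pi D)) δn i = D i δn := rfl
  rw [hLD, hD]
  simp only [ContinuousLinearMap.smul_apply, ContinuousLinearMap.comp_apply,
    innerSL_apply_apply, smul_eq_mul, hTapp]

end
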